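/- Linearized bicycle flow formula: if r solves the bicycle equation ℓ·ṙ = −v + (v·r)r on S^{n−1} and ξ(t) ∈ T_{r(t)}S^{n−1} solves the linearization ℓ·ξ̇ = (v·ξ)r + (v·r)ξ, then ξ(t) = f(t)·ξ̂(t), where ξ̂ is the parallel transport of ξ(t₀) along r(t) in S^{n−1} (Levi-Civita) and f(t) = exp(∫_{t₀}^t (r·v)/ℓ ds). -/

import Mathlib

open RealInnerProductSpace

/-- Linearized bicycle flow (Theorem on the derivative of the monodromy): if ξ solves the
linearization of the bicycle equation along a solution r on the unit sphere, and ξ̂ is the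
parallel transport of ξ(t₀) along r (i.e. ξ̂ ⟂ r with derivative normal to the sphere),
then ξ(t) = exp(∫_{t₀}^t (r·v)/ℓ) · ξ̂(t). -/
theorem linearized_bicycle_flow
    {n : ℕ} (ℓ : ℝ) (hℓ : 0 < ℓ) (v r ξ ξhat : ℝ → EuclideanSpace ℝ (Fin n))
    (hv : Continuous v) (hr : Differentiable ℝ r) (hunit : ∀ t, ‖r t‖ = 1)
    (hode : ∀ t, ℓ • deriv r t = -v t + ⟪v t, r t⟫ • r t)
    (hξ : Differentiable ℝ ξ) (hξtan : ∀ t, ⟪ξ t, r t⟫ = 0)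
    (hlin : ∀ t, ℓ • deriv ξ t = ⟪v t, ξ t⟫ • r t + ⟪v t, r t⟫ • ξ t)
    (hξhat : Differentiable ℝ ξhat) (hξhattan : ∀ t, ⟪ξhat t, r t⟫ = 0)
    (hparallel : ∀ t, ∃ c : ℝ, deriv ξhat t = c • r t)
    (t₀ : ℝ) (hinit : ξhat t₀ = ξ t₀) :
    ∀ t, ξ t = Real.exp (∫ s in t₀..t, ⟪r s, v s⟫ / ℓ) • ξhat t := by
  set F : ℝ → ℝ := fun t => ∫ s in t₀..t, ⟪r s, v s⟫ / ℓ with hFdef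
  have hcont : Continuous fun s => ⟪r s, v s⟫ / ℓ :=
    (hr.continuous.inner hv).div_const ℓ
  have hF : ∀ t, HasDerivAt F (⟪r t, v t⟫ / ℓ) t := fun t =>
    intervalIntegral.integral_hasDerivAt_right (hcont.intervalIntegrable _ _)
      (hcont.stronglyMeasurableAtFilter _ _) hcont.continuousAt
  -- w = exp(-F) • ξ - ξhat
  set w : ℝ → EuclideanSpace ℝ (Fin n) := fun t => Real.exp (-(F t)) • ξ t - ξhat t with hwdef
  have hξ' : ∀ t, deriv ξ t = ℓ⁻¹ • (⟪v t, ξ t⟫ • r t + ⟪v t, r t⟫ • ξ t) := by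
    intro t
    rw [← hlin t, smul_smul, inv_mul_cancel₀ hℓ.ne', one_smul]
  have hw : ∀ t, ∃ d : ℝ, HasDerivAt w (d • r t) t := by
    intro t
    obtain ⟨c, hc⟩ := hparallel t
    have h1 := ((hF t).neg).exp
    have h2 : HasDerivAt ξ (deriv ξ t) t := (hξ t).hasDerivAt
    have h3 : HasDerivAt ξhat (c • r t) t := hc ▸ (hξhat t).hasDerivAt
    have h4 := (h1.smul h2).sub h3
    refine ⟨Real.exp (-(F t)) * (ℓ⁻¹ * ⟪v t, ξ t⟫) - c, ?_⟩
    refine h4.congr_deriv ?_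
    rw [hξ' t, real_inner_comm (r t) (v t), div_eq_mul_inv]
    module
  have hwt : ∀ t, ⟪r t, w t⟫ = 0 := by
    intro t
    have h1 : ⟪r t, ξ t⟫ = 0 := by rw [real_inner_comm]; exact hξtan t
    have h2 : ⟪r t, ξhat t⟫ = 0 := by rw [real_inner_comm]; exact hξhattan t
    simp only [hwdef, inner_sub_right, inner_smul_right, h1, h2]
    ring
  have hwdiff : Differentiable ℝ fun t => ⟪w t, w t⟫ := by
    intro t
    obtain ⟨d, hd⟩ := hw t
    exact ((hd.inner ℝ hd)).differentiableAt
  have hderiv0 : ∀ t, deriv (fun t => ⟪w t, w t⟫) t = 0 := by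
    intro t
    obtain ⟨d, hd⟩ := hw t
    have := (hd.inner ℝ hd).deriv
    rw [this, real_inner_smul_right, real_inner_smul_left, real_inner_comm (r t) (w t), hwt t]
    ring
  have hconst : ∀ t, ⟪w t, w t⟫ = ⟪w t₀, w t₀⟫ := by
    intro t
    exact is_const_of_deriv_eq_zero hwdiff hderiv0 t t₀
  have hw0 : w t₀ = 0 := by
    simp only [hwdef, hFdef, intervalIntegral.integral_same, neg_zero, Real.exp_zero, one_smul,
      hinit, sub_self]
  intro t
  have : w t = 0 := by
    have h := hconst t
    rw [hw0] at h
    simp only [inner_zero_right] at h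
    exact inner_self_eq_zero.mp h
  have heq : Real.exp (-(F t)) • ξ t = ξhat t := by
    have := sub_eq_zero.mp (by simpa [hwdef] using this)
    exact this
  calc ξ t = (Real.exp (F t) * Real.exp (-(F t))) • ξ t := by
        rw [← Real.exp_add, add_neg_cancel, Real.exp_zero, one_smul]
    _ = Real.exp (F t) • ξhat t := by rw [← smul_smul, heq]
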